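/- arXiv:2412.02462 — 4 statements merged into one kernel-verified Lean document; each statement's English description precedes it below -/
import Mathlib

section
/- For every integer k ≥ 1 and every q ∈ ℂ with |q| ≤ 1/20, there exists a unique w ∈ ℂ with |w − 1| ≤ 1/2 satisfying the fixed-point equation w = 1 + q·F_k(w;q). -/
/-- `α_i(k) = ∏_{l=1}^{i} (1 - l/k)`. -/
noncomputable def alphaCoef (i k : ℕ) : ℝ :=
  ∏ l ∈ Finset.Icc 1 i, (1 - (l : ℝ) / (k : ℝ))

/-- `α_i(-k)⁻¹ = k^i · k! / (k+i)!`. -/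
noncomputable def alphaNegInv (i k : ℕ) : ℝ :=
  (k : ℝ) ^ i * (k.factorial : ℝ) / ((k + i).factorial : ℝ)

/-- The `i`-th term of the series defining `F_k(w;q)`. -/
noncomputable def Fterm (k : ℕ) (w q : ℂ) (i : ℕ) : ℂ :=
  (-1 : ℂ) ^ i * ((alphaCoef i k : ℂ) * w ^ (-(i : ℤ)) - (alphaNegInv i k : ℂ) * w ^ (i + 1)) *
    q ^ (i * (i + 1) / 2 - 1)

/-- `F_k(w;q) = ∑_{i≥1} (-1)^i [α_i(k) w^{-i} - α_i(-k)⁻¹ w^{i+1}] q^{i(i+1)/2 - 1}`. -/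
noncomputable def FK (k : ℕ) (w q : ℂ) : ℂ :=
  ∑' i : ℕ, Fterm k w q (i + 1)


lemma abs_alphaCoef_le (i k : ℕ) (hk : 1 ≤ k) : |alphaCoef i k| ≤ 1 := by
  rcases le_or_gt k i with h | h
  · have hz : alphaCoef i k = 0 := by
      refine Finset.prod_eq_zero (Finset.mem_Icc.2 ⟨hk, h⟩) ?_
      have : (k : ℝ) ≠ 0 := by positivity
      field_simp
      norm_num
    simp [hz]
  · have h0 : 0 ≤ alphaCoef i k := by
      refine Finset.prod_nonneg fun l hl => ?_
      rw [Finset.mem_Icc] at hl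
      have : (l : ℝ) ≤ k := by exact_mod_cast le_of_lt (lt_of_le_of_lt hl.2 h)
      have hk0 : (0:ℝ) < k := by positivity
      rw [sub_nonneg, div_le_one hk0]; exact this
    have h1 : alphaCoef i k ≤ 1 := by
      refine Finset.prod_le_one (fun l hl => ?_) (fun l hl => ?_)
      · rw [Finset.mem_Icc] at hl
        have : (l : ℝ) ≤ k := by exact_mod_cast le_of_lt (lt_of_le_of_lt hl.2 h)
        have hk0 : (0:ℝ) < k := by positivity
        rw [sub_nonneg, div_le_one hk0]; exact this
      · rw [Finset.mem_Icc] at hl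
        have hl1 : (0:ℝ) ≤ (l:ℝ) / k := by positivity
        linarith
    rw [abs_of_nonneg h0]; exact h1

lemma abs_alphaNegInv_le (i k : ℕ) : |alphaNegInv i k| ≤ 1 := by
  have h0 : 0 ≤ alphaNegInv i k := by unfold alphaNegInv; positivity
  rw [abs_of_nonneg h0]
  unfold alphaNegInv
  rw [div_le_one (by positivity)]
  have hnat : k ^ i * k.factorial ≤ (k + i).factorial := by
    calc k ^ i * k.factorial ≤ (k+1) ^ i * k.factorial :=
          Nat.mul_le_mul_right _ (Nat.pow_le_pow_left (Nat.le_succ k) i)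
      _ = k.factorial * (k+1)^i := Nat.mul_comm _ _
      _ ≤ (k + i).factorial := Nat.factorial_mul_pow_le_factorial
  exact_mod_cast hnat

lemma pow_sub_pow_norm_le {x y : ℂ} {M : ℝ} (hx : ‖x‖ ≤ M) (hy : ‖y‖ ≤ M) (hM : 0 ≤ M) (n : ℕ) :
    ‖x ^ n - y ^ n‖ ≤ n * M ^ (n - 1) * ‖x - y‖ := by
  rw [← geom_sum₂_mul]
  rw [norm_mul]
  gcongr
  calc ‖∑ i ∈ Finset.range n, x ^ i * y ^ (n - 1 - i)‖
      ≤ ∑ i ∈ Finset.range n, ‖x ^ i * y ^ (n - 1 - i)‖ := norm_sum_le _ _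
    _ ≤ ∑ i ∈ Finset.range n, M ^ (n - 1) := by
        refine Finset.sum_le_sum fun i hi => ?_
        rw [Finset.mem_range] at hi
        rw [norm_mul, norm_pow, norm_pow]
        calc ‖x‖ ^ i * ‖y‖ ^ (n - 1 - i) ≤ M ^ i * M ^ (n - 1 - i) := by
              gcongr
          _ = M ^ (n - 1) := by rw [← pow_add]; congr 1; omega
    _ = n * M ^ (n - 1) := by rw [Finset.sum_const, Finset.card_range, nsmul_eq_mul]

lemma exp_ge (i : ℕ) : i ≤ (i + 1) * ((i + 1) + 1) / 2 - 1 := by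
  have h : (i + 1) ≤ (i + 1) * ((i + 1) + 1) / 2 := by
    rw [Nat.le_div_iff_mul_le (by norm_num)]
    nlinarith
  omega

lemma q_pow_le (i : ℕ) (q : ℂ) (hq : ‖q‖ ≤ 1 / 20) :
    ‖q ^ ((i + 1) * ((i + 1) + 1) / 2 - 1)‖ ≤ (1 / 20 : ℝ) ^ i := by
  rw [norm_pow]
  calc ‖q‖ ^ ((i + 1) * ((i + 1) + 1) / 2 - 1)
      ≤ (1 / 20 : ℝ) ^ ((i + 1) * ((i + 1) + 1) / 2 - 1) :=
        pow_le_pow_left₀ (norm_nonneg q) hq _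
    _ ≤ (1 / 20 : ℝ) ^ i :=
        pow_le_pow_of_le_one (by norm_num) (by norm_num) (exp_ge i)

section Ball
variable {w w' q : ℂ} (hw : ‖w - 1‖ ≤ 1 / 2)
include hw

lemma ball_lb : (1 / 2 : ℝ) ≤ ‖w‖ := by
  have h := norm_sub_norm_le (1 : ℂ) w
  rw [norm_sub_rev] at h
  simp only [norm_one] at h
  linarith

lemma ball_ub : ‖w‖ ≤ 3 / 2 := by
  have h : ‖w‖ = ‖w - 1 + 1‖ := by ring_nf
  rw [h]
  calc ‖w - 1 + 1‖ ≤ ‖w - 1‖ + ‖(1 : ℂ)‖ := norm_add_le _ _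
    _ ≤ 3 / 2 := by rw [norm_one]; linarith

lemma ball_ne_zero : w ≠ 0 := by
  intro h
  have := ball_lb hw
  rw [h, norm_zero] at this
  norm_num at this

lemma ball_inv : ‖w⁻¹‖ ≤ 2 := by
  rw [norm_inv]
  have h := ball_lb hw
  have : ‖w‖⁻¹ ≤ (1 / 2 : ℝ)⁻¹ := by
    apply inv_anti₀ (by norm_num) h
  linarith [this]

end Ball

lemma normA (i k : ℕ) (hk : 1 ≤ k) : ‖((alphaCoef i k : ℝ) : ℂ)‖ ≤ 1 := by
  rw [Complex.norm_real, Real.norm_eq_abs]; exact abs_alphaCoef_le i k hk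

lemma normB (i k : ℕ) : ‖((alphaNegInv i k : ℝ) : ℂ)‖ ≤ 1 := by
  rw [Complex.norm_real, Real.norm_eq_abs]; exact abs_alphaNegInv_le i k

lemma wzpow (w : ℂ) (i : ℕ) : w ^ (-((i : ℕ) : ℤ)) = (w⁻¹) ^ i := by
  rw [zpow_neg, zpow_natCast, inv_pow]

lemma Fterm_norm_le (k i : ℕ) (hk : 1 ≤ k) {w q : ℂ} (hw : ‖w - 1‖ ≤ 1 / 2)
    (hq : ‖q‖ ≤ 1 / 20) : ‖Fterm k w q (i + 1)‖ ≤ 6 * (2 / 5 : ℝ) ^ i := by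
  have hinv := ball_inv hw
  have hub : ‖w‖ ≤ 2 := le_trans (ball_ub hw) (by norm_num)
  simp only [Fterm]
  rw [norm_mul, norm_mul, norm_pow, norm_neg, norm_one, one_pow, one_mul]
  have h1 : ‖((alphaCoef (i+1) k : ℝ) : ℂ) * w ^ (-(((i+1) : ℕ) : ℤ))‖ ≤ 2 ^ (i + 1) := by
    rw [wzpow, norm_mul, norm_pow]
    have := mul_le_mul (normA (i+1) k hk)
      (pow_le_pow_left₀ (norm_nonneg _) hinv (i+1)) (by positivity) zero_le_one
    simpa using this
  have h2 : ‖((alphaNegInv (i+1) k : ℝ) : ℂ) * w ^ ((i + 1) + 1)‖ ≤ 2 ^ (i + 2) := by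
    rw [norm_mul, norm_pow]
    have := mul_le_mul (normB (i+1) k)
      (pow_le_pow_left₀ (norm_nonneg _) hub ((i+1)+1)) (by positivity) zero_le_one
    simpa using this
  have h3 := q_pow_le i q hq
  have hmid : ‖((alphaCoef (i+1) k : ℝ) : ℂ) * w ^ (-(((i+1) : ℕ) : ℤ))
      - ((alphaNegInv (i+1) k : ℝ) : ℂ) * w ^ ((i + 1) + 1)‖ ≤ 2 ^ (i + 1) + 2 ^ (i + 2) :=
    le_trans (norm_sub_le _ _) (add_le_add h1 h2)
  refine le_trans (mul_le_mul hmid h3 (norm_nonneg _) (by positivity)) ?_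
  · have he : ((2:ℝ)^(i+1) + 2^(i+2)) * (1/20 : ℝ)^i = 6 * ((2:ℝ) * (1/20))^i := by
      rw [mul_pow]; ring
    rw [he]
    have : ((2:ℝ) * (1/20)) = 1/10 := by norm_num
    rw [this]
    gcongr <;> norm_num

lemma nat_aux (i : ℕ) : 6 * i + 8 ≤ 8 * 4 ^ i := by
  induction i with
  | zero => norm_num
  | succ n ih =>
    have h4 : 4 ^ n ≥ 1 := Nat.one_le_pow _ _ (by norm_num)
    calc 6 * (n + 1) + 8 = (6 * n + 8) + 6 := by ring
      _ ≤ 8 * 4 ^ n + 6 := by omega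
      _ ≤ 8 * 4 ^ (n + 1) := by
        have : 8 * 4 ^ (n+1) = 8 * 4 ^ n + 24 * 4 ^ n := by ring
        omega

lemma inv_diff_le {w w' : ℂ} (hw : ‖w - 1‖ ≤ 1 / 2) (hw' : ‖w' - 1‖ ≤ 1 / 2) :
    ‖w⁻¹ - w'⁻¹‖ ≤ 4 * ‖w - w'‖ := by
  have h0 := ball_ne_zero hw
  have h0' := ball_ne_zero hw'
  have hl := ball_lb hw
  have hl' := ball_lb hw'
  rw [inv_sub_inv h0 h0', norm_div, norm_mul, norm_sub_rev]
  rw [div_le_iff₀ (by positivity)]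
  have h1 : (1 : ℝ) ≤ 4 * (‖w‖ * ‖w'‖) := by nlinarith
  nlinarith [norm_nonneg (w - w')]

lemma Fterm_diff_le (k i : ℕ) (hk : 1 ≤ k) {w w' q : ℂ} (hw : ‖w - 1‖ ≤ 1 / 2)
    (hw' : ‖w' - 1‖ ≤ 1 / 2) (hq : ‖q‖ ≤ 1 / 20) :
    ‖Fterm k w q (i + 1) - Fterm k w' q (i + 1)‖ ≤ 8 * (2 / 5 : ℝ) ^ i * ‖w - w'‖ := by
  have hinv := ball_inv hw
  have hinv' := ball_inv hw'
  have hub := ball_ub hw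
  have hub' := ball_ub hw'
  have hA := normA (i+1) k hk
  have hB := normB (i+1) k
  set A : ℂ := ((alphaCoef (i+1) k : ℝ) : ℂ) with hAdef
  set B : ℂ := ((alphaNegInv (i+1) k : ℝ) : ℂ) with hBdef
  have hdiff : Fterm k w q (i + 1) - Fterm k w' q (i + 1)
      = (-1 : ℂ) ^ (i+1) * ((A * ((w⁻¹) ^ (i+1) - (w'⁻¹) ^ (i+1)))
        - B * (w ^ ((i+1)+1) - w' ^ ((i+1)+1))) * q ^ ((i+1) * ((i+1)+1) / 2 - 1) := by
    simp only [Fterm, wzpow, ← hAdef, ← hBdef]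
    ring
  rw [hdiff, norm_mul, norm_mul, norm_pow, norm_neg, norm_one, one_pow, one_mul]
  have h3 := q_pow_le i q hq
  have h1 : ‖A * ((w⁻¹) ^ (i+1) - (w'⁻¹) ^ (i+1))‖ ≤ (i+1) * 2 ^ i * (4 * ‖w - w'‖) := by
    rw [norm_mul]
    have hp : ‖(w⁻¹) ^ (i+1) - (w'⁻¹) ^ (i+1)‖ ≤ (i+1) * 2 ^ i * ‖w⁻¹ - w'⁻¹‖ := by
      have := pow_sub_pow_norm_le hinv hinv' (by norm_num) (i+1)
      simpa using this
    calc ‖A‖ * ‖(w⁻¹) ^ (i+1) - (w'⁻¹) ^ (i+1)‖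
        ≤ 1 * ((i+1) * 2 ^ i * ‖w⁻¹ - w'⁻¹‖) :=
          mul_le_mul hA hp (norm_nonneg _) zero_le_one
      _ = (i+1) * 2 ^ i * ‖w⁻¹ - w'⁻¹‖ := one_mul _
      _ ≤ (i+1) * 2 ^ i * (4 * ‖w - w'‖) := by
          have := inv_diff_le hw hw'
          gcongr
  have h2 : ‖B * (w ^ ((i+1)+1) - w' ^ ((i+1)+1))‖ ≤ ((i:ℝ)+2) * (3/2) ^ (i+1) * ‖w - w'‖ := by
    rw [norm_mul]
    have hp : ‖w ^ ((i+1)+1) - w' ^ ((i+1)+1)‖ ≤ ((i:ℝ)+2) * (3/2) ^ (i+1) * ‖w - w'‖ := by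
      have := pow_sub_pow_norm_le hub hub' (by norm_num) ((i+1)+1)
      have heq : (((i+1)+1 : ℕ) : ℝ) = (i : ℝ) + 2 := by push_cast; ring
      simpa [heq] using this
    calc ‖B‖ * ‖w ^ ((i+1)+1) - w' ^ ((i+1)+1)‖
        ≤ 1 * (((i:ℝ)+2) * (3/2) ^ (i+1) * ‖w - w'‖) :=
          mul_le_mul hB hp (norm_nonneg _) zero_le_one
      _ = ((i:ℝ)+2) * (3/2) ^ (i+1) * ‖w - w'‖ := one_mul _
  have hmid : ‖A * ((w⁻¹) ^ (i+1) - (w'⁻¹) ^ (i+1))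
      - B * (w ^ ((i+1)+1) - w' ^ ((i+1)+1))‖
      ≤ ((i:ℝ)+1) * 2 ^ i * (4 * ‖w - w'‖) + ((i:ℝ)+2) * (3/2) ^ (i+1) * ‖w - w'‖ :=
    le_trans (norm_sub_le _ _) (add_le_add h1 h2)
  refine le_trans (mul_le_mul hmid h3 (norm_nonneg _) (by positivity)) ?_
  have hstep : ((i:ℝ)+1) * 2 ^ i * (4 * ‖w - w'‖) + ((i:ℝ)+2) * (3/2) ^ (i+1) * ‖w - w'‖
      ≤ (6 * (i:ℝ) + 8) * 2 ^ i * ‖w - w'‖ := by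
    have step1 : ((i:ℝ)+2) * (3/2) ^ (i+1) * ‖w - w'‖
        ≤ ((i:ℝ)+2) * 2 ^ (i+1) * ‖w - w'‖ := by
      gcongr <;> norm_num
    have e1 : ((i:ℝ)+1) * 2 ^ i * (4 * ‖w - w'‖) + ((i:ℝ)+2) * 2 ^ (i+1) * ‖w - w'‖
        = (6 * (i:ℝ) + 8) * 2 ^ i * ‖w - w'‖ := by ring
    linarith
  have hkey : (6 * (i:ℝ) + 8) * ((2:ℝ) * (1/20)) ^ i ≤ 8 * (2 / 5 : ℝ) ^ i := by
    have hc : (6 * (i:ℝ) + 8) ≤ 8 * 4 ^ i := by exact_mod_cast nat_aux i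
    have h110 : ((2:ℝ) * (1/20)) = 1/10 := by norm_num
    have h45 : ((2:ℝ)/5) ^ i = 4 ^ i * (1/10 : ℝ) ^ i := by rw [← mul_pow]; norm_num
    rw [h110, h45]
    calc (6 * (i:ℝ) + 8) * (1/10 : ℝ) ^ i ≤ (8 * 4 ^ i) * (1/10 : ℝ) ^ i :=
          mul_le_mul_of_nonneg_right hc (by positivity)
      _ = 8 * (4 ^ i * (1/10 : ℝ) ^ i) := by ring
  calc (((i:ℝ)+1) * 2 ^ i * (4 * ‖w - w'‖) + ((i:ℝ)+2) * (3/2) ^ (i+1) * ‖w - w'‖)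
        * (1/20 : ℝ) ^ i
      ≤ ((6 * (i:ℝ) + 8) * 2 ^ i * ‖w - w'‖) * (1/20 : ℝ) ^ i :=
        mul_le_mul_of_nonneg_right hstep (by positivity)
    _ = ((6 * (i:ℝ) + 8) * ((2:ℝ) * (1/20)) ^ i) * ‖w - w'‖ := by rw [mul_pow]; ring
    _ ≤ 8 * (2 / 5 : ℝ) ^ i * ‖w - w'‖ :=
        mul_le_mul_of_nonneg_right hkey (norm_nonneg _)

lemma summable_geo (c : ℝ) : Summable (fun i : ℕ => c * (2 / 5 : ℝ) ^ i) :=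
  (summable_geometric_of_lt_one (by norm_num) (by norm_num)).mul_left c

lemma summable_Fterm (k : ℕ) (hk : 1 ≤ k) {w q : ℂ} (hw : ‖w - 1‖ ≤ 1 / 2)
    (hq : ‖q‖ ≤ 1 / 20) : Summable (fun i : ℕ => Fterm k w q (i + 1)) := by
  apply Summable.of_norm
  exact Summable.of_nonneg_of_le (fun i => norm_nonneg _)
    (fun i => Fterm_norm_le k i hk hw hq) (summable_geo 6)

lemma summable_norm_Fterm (k : ℕ) (hk : 1 ≤ k) {w q : ℂ} (hw : ‖w - 1‖ ≤ 1 / 2)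
    (hq : ‖q‖ ≤ 1 / 20) : Summable (fun i : ℕ => ‖Fterm k w q (i + 1)‖) :=
  Summable.of_nonneg_of_le (fun i => norm_nonneg _)
    (fun i => Fterm_norm_le k i hk hw hq) (summable_geo 6)

lemma tsum_geo (c : ℝ) : ∑' i : ℕ, c * (2 / 5 : ℝ) ^ i = c * (5 / 3) := by
  rw [tsum_mul_left, tsum_geometric_of_lt_one (by norm_num) (by norm_num)]
  norm_num

lemma FK_norm_le (k : ℕ) (hk : 1 ≤ k) {w q : ℂ} (hw : ‖w - 1‖ ≤ 1 / 2)
    (hq : ‖q‖ ≤ 1 / 20) : ‖FK k w q‖ ≤ 10 := by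
  calc ‖FK k w q‖ ≤ ∑' i : ℕ, ‖Fterm k w q (i + 1)‖ :=
        norm_tsum_le_tsum_norm (summable_norm_Fterm k hk hw hq)
    _ ≤ ∑' i : ℕ, 6 * (2 / 5 : ℝ) ^ i :=
        Summable.tsum_le_tsum (fun i => Fterm_norm_le k i hk hw hq)
          (summable_norm_Fterm k hk hw hq) (summable_geo 6)
    _ = 10 := by rw [tsum_geo]; norm_num

lemma FK_diff_le (k : ℕ) (hk : 1 ≤ k) {w w' q : ℂ} (hw : ‖w - 1‖ ≤ 1 / 2)
    (hw' : ‖w' - 1‖ ≤ 1 / 2) (hq : ‖q‖ ≤ 1 / 20) :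
    ‖FK k w q - FK k w' q‖ ≤ (40 / 3) * ‖w - w'‖ := by
  have hs := summable_Fterm k hk hw hq
  have hs' := summable_Fterm k hk hw' hq
  have hsub : FK k w q - FK k w' q = ∑' i : ℕ, (Fterm k w q (i + 1) - Fterm k w' q (i + 1)) :=
    (Summable.tsum_sub hs hs').symm
  rw [hsub]
  have hnorm : Summable (fun i : ℕ => ‖Fterm k w q (i + 1) - Fterm k w' q (i + 1)‖) :=
    Summable.of_nonneg_of_le (fun i => norm_nonneg _)
      (fun i => Fterm_diff_le k i hk hw hw' hq)
      ((summable_geo (8 * ‖w - w'‖)).congr (fun i => by ring))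
  calc ‖∑' i : ℕ, (Fterm k w q (i + 1) - Fterm k w' q (i + 1))‖
      ≤ ∑' i : ℕ, ‖Fterm k w q (i + 1) - Fterm k w' q (i + 1)‖ :=
        norm_tsum_le_tsum_norm hnorm
    _ ≤ ∑' i : ℕ, (8 * ‖w - w'‖) * (2 / 5 : ℝ) ^ i := by
        refine Summable.tsum_le_tsum (fun i => ?_) hnorm (summable_geo _)
        calc ‖Fterm k w q (i + 1) - Fterm k w' q (i + 1)‖
            ≤ 8 * (2 / 5 : ℝ) ^ i * ‖w - w'‖ := Fterm_diff_le k i hk hw hw' hq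
          _ = (8 * ‖w - w'‖) * (2 / 5 : ℝ) ^ i := by ring
    _ = (8 * ‖w - w'‖) * (5 / 3) := tsum_geo _
    _ = (40 / 3) * ‖w - w'‖ := by ring


theorem stmt12 (k : ℕ) (hk : 1 ≤ k) (q : ℂ) (hq : ‖q‖ ≤ 1 / 20) :
    ∃! w : ℂ, ‖w - 1‖ ≤ 1 / 2 ∧ w = 1 + q * FK k w q := by
  have hq' : ‖q‖ ≤ 1 / 20 := hq
  set S := Metric.closedBall (1 : ℂ) (1 / 2) with hS
  have hmem : ∀ w : ℂ, w ∈ S ↔ ‖w - 1‖ ≤ 1 / 2 := by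
    intro w
    rw [hS, Metric.mem_closedBall, dist_eq_norm]
  haveI : CompleteSpace S := (Metric.isClosed_closedBall).completeSpace_coe
  haveI : Nonempty S := ⟨⟨1, by simp [hS]⟩⟩
  -- the map
  have hmapsto : ∀ x : S, (1 + q * FK k (x : ℂ) q) ∈ S := by
    intro x
    rw [hmem]
    have hx : ‖(x : ℂ) - 1‖ ≤ 1 / 2 := (hmem _).1 x.2
    have : ‖1 + q * FK k (x : ℂ) q - 1‖ = ‖q‖ * ‖FK k (x : ℂ) q‖ := by
      rw [add_sub_cancel_left, norm_mul]
    rw [this]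
    calc ‖q‖ * ‖FK k (x : ℂ) q‖ ≤ (1 / 20) * 10 := by
          exact mul_le_mul hq' (FK_norm_le k hk hx hq') (norm_nonneg _) (by norm_num)
      _ = 1 / 2 := by norm_num
  set f : S → S := fun x => ⟨1 + q * FK k (x : ℂ) q, hmapsto x⟩ with hf
  have hc : ContractingWith (2 / 3 : NNReal) f := by
    constructor
    · rw [← NNReal.coe_lt_coe]; norm_num
    · apply LipschitzWith.of_dist_le_mul
      intro x y
      have hx : ‖(x : ℂ) - 1‖ ≤ 1 / 2 := (hmem _).1 x.2
      have hy : ‖(y : ℂ) - 1‖ ≤ 1 / 2 := (hmem _).1 y.2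
      have hd : dist (f x) (f y) = ‖q‖ * ‖FK k (x : ℂ) q - FK k (y : ℂ) q‖ := by
        rw [Subtype.dist_eq, hf, dist_eq_norm]
        simp only
        rw [show (1 + q * FK k (x : ℂ) q) - (1 + q * FK k (y : ℂ) q)
            = q * (FK k (x : ℂ) q - FK k (y : ℂ) q) by ring, norm_mul]
      rw [hd, Subtype.dist_eq, dist_eq_norm]
      calc ‖q‖ * ‖FK k (x : ℂ) q - FK k (y : ℂ) q‖
          ≤ (1 / 20) * ((40 / 3) * ‖(x : ℂ) - (y : ℂ)‖) := by
            exact mul_le_mul hq' (FK_diff_le k hk hx hy hq') (norm_nonneg _) (by norm_num)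
        _ = (2 / 3) * ‖(x : ℂ) - (y : ℂ)‖ := by ring
        _ = ((2 / 3 : NNReal) : ℝ) * ‖(x : ℂ) - (y : ℂ)‖ := by norm_num
  set z : S := ContractingWith.fixedPoint f hc with hz
  have hzfix : f z = z := hc.fixedPoint_isFixedPt
  refine ⟨(z : ℂ), ⟨?_, ?_⟩, ?_⟩
  · exact (hmem _).1 z.2
  · have := congrArg (Subtype.val) hzfix
    simp only [hf] at this
    exact this.symm
  · rintro y ⟨hy1, hy2⟩
    have hy1' : ‖y - 1‖ ≤ 1 / 2 := hy1
    have hyS : y ∈ S := (hmem _).2 hy1'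
    have hyfix : Function.IsFixedPt f ⟨y, hyS⟩ := by
      apply Subtype.ext
      simp only [hf]
      exact hy2.symm
    have := hc.fixedPoint_unique hyfix
    exact congrArg Subtype.val this
end

section
/- For all integers i ≥ 1 and k ≥ 1, one has |∏_{l=1}^{i} (1 − l/k) − (1 − i(i+1)/(2k) + (i−1)·i·(i+1)·(3i+2)/(24k²))| ≤ (i+1)!/k³. -/
set_option maxHeartbeats 1000000

theorem aux14_nat : ∀ i : ℕ, (i - 1) * i * (3 * i + 2) ≤ 12 * Nat.factorial i := by
  intro i
  induction i with
  | zero => decide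
  | succ n ih =>
    rcases Nat.lt_or_ge n 3 with h | h
    · interval_cases n <;> decide
    · obtain ⟨j, rfl⟩ : ∃ j, n = j + 3 := ⟨n - 3, by omega⟩
      have e1 : j + 3 + 1 - 1 = j + 3 := by omega
      have e2 : j + 3 - 1 = j + 2 := by omega
      have h1 : (j + 3 + 1 - 1) * (j + 3 + 1) * (3 * (j + 3 + 1) + 2) ≤
          (j + 3 + 1) * ((j + 3 - 1) * (j + 3) * (3 * (j + 3) + 2)) := by
        rw [e1, e2]; nlinarith [sq_nonneg j, j.zero_le]
      calc (j + 3 + 1 - 1) * (j + 3 + 1) * (3 * (j + 3 + 1) + 2)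
          ≤ (j + 3 + 1) * ((j + 3 - 1) * (j + 3) * (3 * (j + 3) + 2)) := h1
        _ ≤ (j + 3 + 1) * (12 * Nat.factorial (j + 3)) := Nat.mul_le_mul_left _ ih
        _ = 12 * Nat.factorial (j + 3 + 1) := by rw [show Nat.factorial (j+3+1) = (j+3+1) * Nat.factorial (j+3) from Nat.factorial_succ _]; ring

theorem aux14_real (i : ℕ) (hi : 1 ≤ i) :
    ((i : ℝ) - 1) * (i : ℝ) * (3 * (i : ℝ) + 2) ≤ 12 * (Nat.factorial i : ℝ) := by
  have h := aux14_nat i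
  have : (((i - 1) * i * (3 * i + 2) : ℕ) : ℝ) ≤ ((12 * Nat.factorial i : ℕ) : ℝ) := by
    exact_mod_cast h
  push_cast [Nat.cast_sub hi] at this
  exact this

theorem stmt14 (i k : ℕ) (hi : 1 ≤ i) (hk : 1 ≤ k) :
    |(∏ l ∈ Finset.Icc 1 i, (1 - (l : ℝ) / (k : ℝ))) -
        (1 - (i : ℝ) * ((i : ℝ) + 1) / (2 * (k : ℝ)) +
          ((i : ℝ) - 1) * (i : ℝ) * ((i : ℝ) + 1) * (3 * (i : ℝ) + 2) / (24 * (k : ℝ) ^ 2))| ≤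
      ((i + 1).factorial : ℝ) / (k : ℝ) ^ 3 := by
  rcases eq_or_lt_of_le hk with hk1 | hk2
  · -- k = 1
    have hk1 : k = 1 := hk1.symm
    subst hk1
    have hprod : (∏ l ∈ Finset.Icc 1 i, (1 - (l : ℝ) / ((1:ℕ) : ℝ))) = 0 := by
      apply Finset.prod_eq_zero (Finset.mem_Icc.2 ⟨le_refl 1, hi⟩)
      norm_num
    rw [hprod]
    have ha : (1:ℝ) ≤ (i:ℝ) := by exact_mod_cast hi
    have hQ : ((i:ℝ) - 1) * (i:ℝ) * ((i:ℝ) + 1) * (3 * (i:ℝ) + 2) / 24 ≤ ((i+1).factorial : ℝ) / 2 := by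
      have h3 := aux14_real i hi
      have hfs : ((i+1).factorial : ℝ) = ((i:ℝ) + 1) * (Nat.factorial i : ℝ) := by
        rw [Nat.factorial_succ]; push_cast; ring
      nlinarith [h3, ha]
    have hQ0 : 0 ≤ ((i:ℝ) - 1) * (i:ℝ) * ((i:ℝ) + 1) * (3 * (i:ℝ) + 2) :=
      mul_nonneg (mul_nonneg (mul_nonneg (by linarith) (by linarith)) (by linarith)) (by linarith)
    have hif : (i:ℝ) ≤ (Nat.factorial i : ℝ) := by exact_mod_cast Nat.self_le_factorial i
    have hfs : ((i+1).factorial : ℝ) = ((i:ℝ) + 1) * (Nat.factorial i : ℝ) := by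
      rw [Nat.factorial_succ]; push_cast; ring
    have hf2 : (2:ℝ) ≤ ((i+1).factorial : ℝ) := by
      exact_mod_cast Nat.factorial_le (by omega : 2 ≤ i + 1)
    rw [abs_le]
    norm_num
    constructor
    · nlinarith [hQ0]
    · nlinarith [hQ, hf2]
  · -- k ≥ 2
    have hK2 : (2:ℝ) ≤ (k:ℝ) := by exact_mod_cast hk2
    have hK0 : (0:ℝ) < (k:ℝ) := by linarith
    induction i, hi using Nat.le_induction with
    | base =>
      have : (∏ l ∈ Finset.Icc (1:ℕ) 1, (1 - (l : ℝ) / (k : ℝ))) = 1 - 1 / (k:ℝ) := by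
        rw [Finset.Icc_self, Finset.prod_singleton]; norm_num
      rw [this]
      have hz : (1 - 1 / (k:ℝ)) -
          (1 - (1:ℝ) * ((1:ℝ) + 1) / (2 * (k:ℝ)) +
            ((1:ℝ) - 1) * (1:ℝ) * ((1:ℝ) + 1) * (3 * (1:ℝ) + 2) / (24 * (k:ℝ) ^ 2)) = 0 := by
        field_simp; ring
      norm_num at hz ⊢
      rw [hz]
      norm_num
      positivity
    | succ n hn ih =>
      have ih := ih
      have ha : (1:ℝ) ≤ (n:ℝ) := by exact_mod_cast hn
      have hKne : ((k:ℝ)) ≠ 0 := ne_of_gt hK0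
      rw [Finset.prod_Icc_succ_top (by omega : 1 ≤ n + 1)]
      set p := ∏ l ∈ Finset.Icc 1 n, (1 - (l:ℝ)/(k:ℝ)) with hp
      set a := (n:ℝ) with hadef
      set E := p - (1 - a*(a+1)/(2*(k:ℝ)) + (a-1)*a*(a+1)*(3*a+2)/(24*(k:ℝ)^2)) with hE
      set N := (a-1)*a*(a+1)^2*(3*a+2) with hN
      have hXE : p * (1 - (((n+1:ℕ)):ℝ)/(k:ℝ)) -
          (1 - ((n+1:ℕ):ℝ) * (((n+1:ℕ):ℝ) + 1) / (2 * (k:ℝ)) +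
            (((n+1:ℕ):ℝ) - 1) * ((n+1:ℕ):ℝ) * (((n+1:ℕ):ℝ) + 1) * (3 * ((n+1:ℕ):ℝ) + 2) / (24 * (k:ℝ) ^ 2))
          = E * (1 - (a+1)/(k:ℝ)) + (-N / (24*(k:ℝ)^3)) := by
        rw [hE, hN]
        push_cast
        field_simp
        ring
      rw [hXE]
      have hN0 : 0 ≤ N := by
        rw [hN]
        have h1 : (0:ℝ) ≤ a - 1 := by linarith
        positivity
      have hd : |(-N / (24*(k:ℝ)^3))| = N / (24*(k:ℝ)^3) := by
        rw [abs_div, abs_neg, abs_of_nonneg hN0, abs_of_nonneg (by positivity : (0:ℝ) ≤ 24*(k:ℝ)^3)]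
      have h1c : |1 - (a+1)/(k:ℝ)| ≤ 1 + (a+1)/2 := by
        have hcb : (a+1)/(k:ℝ) ≤ (a+1)/2 := by
          apply div_le_div_of_nonneg_left (by linarith) (by norm_num) hK2
        have hc0 : 0 ≤ (a+1)/(k:ℝ) := by positivity
        rw [abs_le]; constructor <;> nlinarith
      have hL3 : (a-1)*a*(3*a+2) ≤ 12*(Nat.factorial n : ℝ) := aux14_real n hn
      have hfs : ((n+1).factorial : ℝ) = (a+1)*(Nat.factorial n : ℝ) := by
        rw [Nat.factorial_succ]; push_cast; ring
      have hfact : ((n+1+1).factorial : ℝ) = (a+2)*((n+1).factorial : ℝ) := by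
        rw [Nat.factorial_succ (n+1)]; push_cast; ring
      have hnum : ((n+1).factorial : ℝ)*(1+(a+1)/2) + N/24 ≤ ((n+1+1).factorial : ℝ) := by
        rw [hN, hfact, hfs]
        have key2 : (a-1)*a*(3*a+2)*((a+1)^2) ≤ 12*(Nat.factorial n : ℝ)*((a+1)^2) :=
          mul_le_mul_of_nonneg_right hL3 (by positivity)
        linarith [key2]
      calc |E * (1 - (a+1)/(k:ℝ)) + (-N / (24*(k:ℝ)^3))|
          ≤ |E| * |1 - (a+1)/(k:ℝ)| + |(-N / (24*(k:ℝ)^3))| := by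
            rw [← abs_mul]; exact abs_add_le _ _
        _ ≤ (((n+1).factorial : ℝ)/(k:ℝ)^3) * (1+(a+1)/2) + N / (24*(k:ℝ)^3) := by
            rw [hd]
            exact add_le_add (mul_le_mul ih h1c (abs_nonneg _) (by positivity)) le_rfl
        _ = (((n+1).factorial : ℝ)*(1+(a+1)/2) + N/24) / (k:ℝ)^3 := by ring
        _ ≤ ((n+1+1).factorial : ℝ) / (k:ℝ)^3 := by gcongr
end

section
/- Define μ₁(n) := Σ_{l≥1} l·⌊2n/(l(l+1))⌋ (a finite sum). Then μ₁(2) = 2, and μ₁(n) > n for every integer n ≥ 3. -/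
/-- `μ₁(n) = ∑_{l≥1} l · ⌊2n/(l(l+1))⌋` (the summand vanishes for `l(l+1) > 2n`,
so the range `1 ≤ l ≤ 2n` captures all nonzero terms). -/
def mu1 (n : ℕ) : ℕ := ∑ l ∈ Finset.Icc 1 (2 * n), l * (2 * n / (l * (l + 1)))

theorem stmt17 : mu1 2 = 2 ∧ ∀ n : ℕ, 3 ≤ n → (n : ℕ) < mu1 n := by
  constructor
  · decide
  · intro n hn
    have hsub : ({1, 2} : Finset ℕ) ⊆ Finset.Icc 1 (2 * n) := by
      intro x hx
      simp only [Finset.mem_insert, Finset.mem_singleton] at hx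
      simp only [Finset.mem_Icc]
      omega
    have hle : ∑ l ∈ ({1, 2} : Finset ℕ), l * (2 * n / (l * (l + 1))) ≤ mu1 n := by
      exact Finset.sum_le_sum_of_subset hsub
    rw [Finset.sum_pair (by norm_num)] at hle
    norm_num at hle
    omega
end

section
/- Let P(x) = Σ_{j=0}^{n} a_j x^j be a real polynomial with a_n > 0, let 1 ≤ m ≤ n, and assume a_j ≥ 0 for all j with m ≤ j ≤ n. Fix r > 0 and set b(r) := Σ_{j=m}^{n} a_j r^{j−m}, c(r) := max_{1≤i≤m} (|a_{m−i}|/b(r))^{1/i}, and ν_r(P) := max{r, 2·c(r)}. Then P(x) > 0 for every real x > ν_r(P). -/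
theorem stmt19 (n m : ℕ) (a : ℕ → ℝ) (han : 0 < a n) (hm1 : 1 ≤ m) (hmn : m ≤ n)
    (hpos : ∀ j, m ≤ j → j ≤ n → 0 ≤ a j) (r : ℝ) (hr : 0 < r) (b c ν : ℝ)
    (hb : b = ∑ j ∈ Finset.Icc m n, a j * r ^ (j - m))
    (hc : c = (Finset.Icc 1 m).sup' (Finset.nonempty_Icc.mpr hm1)
      (fun i => (|a (m - i)| / b) ^ ((1 : ℝ) / (i : ℝ))))
    (hν : ν = max r (2 * c)) :
    ∀ x : ℝ, ν < x → 0 < ∑ j ∈ Finset.range (n + 1), a j * x ^ j := by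
  intro x hx
  have hbpos : 0 < b := by
    rw [hb]
    apply Finset.sum_pos' (fun j hj => by
      obtain ⟨h1, h2⟩ := Finset.mem_Icc.mp hj
      exact mul_nonneg (hpos j h1 h2) (pow_nonneg hr.le _))
    exact ⟨n, Finset.mem_Icc.mpr ⟨hmn, le_refl n⟩,
      mul_pos han (pow_pos hr _)⟩
  have hc0 : 0 ≤ c := by
    rw [hc]
    have h1 : (1 : ℕ) ∈ Finset.Icc 1 m := Finset.mem_Icc.mpr ⟨le_refl 1, hm1⟩
    exact le_trans (Real.rpow_nonneg (div_nonneg (abs_nonneg _) hbpos.le) _)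
      (Finset.le_sup' (fun i => (|a (m - i)| / b) ^ ((1 : ℝ) / (i : ℝ))) h1)
  have hxr : r < x := lt_of_le_of_lt (le_max_left _ _) (hν ▸ hx)
  have hx0 : 0 < x := hr.trans hxr
  have hcx : 2 * c < x := lt_of_le_of_lt (le_max_right r _) (hν ▸ hx)
  have hcx2 : c ≤ x / 2 := by linarith
  -- key: |a (m - i)| ≤ b * c ^ i
  have key : ∀ i, i ∈ Finset.Icc 1 m → |a (m - i)| ≤ b * c ^ i := by
    intro i hi
    obtain ⟨hi1, him⟩ := Finset.mem_Icc.mp hi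
    have hle : (|a (m - i)| / b) ^ ((1 : ℝ) / (i : ℝ)) ≤ c := hc ▸ Finset.le_sup' (fun i => (|a (m - i)| / b) ^ ((1 : ℝ) / (i : ℝ))) hi
    have hi0 : (i : ℝ) ≠ 0 := Nat.cast_ne_zero.mpr (by omega)
    have htnn : 0 ≤ |a (m - i)| / b := div_nonneg (abs_nonneg _) hbpos.le
    have heq : ((|a (m - i)| / b) ^ ((1 : ℝ) / (i : ℝ))) ^ i = |a (m - i)| / b := by
      rw [← Real.rpow_natCast ((|a (m - i)| / b) ^ ((1 : ℝ) / (i : ℝ))) i,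
        ← Real.rpow_mul htnn, one_div_mul_cancel hi0, Real.rpow_one]
    have := pow_le_pow_left₀ (Real.rpow_nonneg htnn _) hle i
    rw [heq] at this
    calc |a (m - i)| = (|a (m - i)| / b) * b := by field_simp
    _ ≤ c ^ i * b := by exact mul_le_mul_of_nonneg_right this hbpos.le
    _ = b * c ^ i := by ring
  -- split the sum
  have hsplit : ∑ j ∈ Finset.range (n + 1), a j * x ^ j
      = (∑ j ∈ Finset.range m, a j * x ^ j) + ∑ j ∈ Finset.Icc m n, a j * x ^ j := by
    rw [Finset.range_eq_Ico, Finset.range_eq_Ico, ← Finset.Ico_add_one_right_eq_Icc m n]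
    exact (Finset.sum_Ico_consecutive (fun j => a j * x ^ j) (Nat.zero_le m) (by omega : m ≤ n + 1)).symm
  -- upper part
  have hupper : b * x ^ m ≤ ∑ j ∈ Finset.Icc m n, a j * x ^ j := by
    rw [hb, Finset.sum_mul]
    apply Finset.sum_le_sum
    intro j hj
    obtain ⟨hjm, hjn⟩ := Finset.mem_Icc.mp hj
    have hxj : x ^ j = x ^ (j - m) * x ^ m := by rw [← pow_add]; congr 1; omega
    rw [hxj, mul_assoc]
    apply mul_le_mul_of_nonneg_left _ (hpos j hjm hjn)
    exact mul_le_mul_of_nonneg_right (pow_le_pow_left₀ hr.le hxr.le _) (pow_pos hx0 m).le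
  -- lower part bounds
  have hterm : ∀ j ∈ Finset.range m, |a j * x ^ j| ≤ b * x ^ m * (1 / 2 : ℝ) ^ (m - j) := by
    intro j hj
    have hjm : j < m := Finset.mem_range.mp hj
    have hik : (m - j) ∈ Finset.Icc 1 m := Finset.mem_Icc.mpr ⟨by omega, by omega⟩
    have h1 : |a j| ≤ b * c ^ (m - j) := by
      have := key (m - j) hik
      rwa [show m - (m - j) = j by omega] at this
    have h2 : c ^ (m - j) ≤ (x / 2) ^ (m - j) := pow_le_pow_left₀ hc0 hcx2 _
    have hxm : x ^ m = x ^ (m - j) * x ^ j := by rw [← pow_add]; congr 1; omega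
    rw [abs_mul, abs_pow, abs_of_pos hx0]
    calc |a j| * x ^ j ≤ b * (x / 2) ^ (m - j) * x ^ j := by
          apply mul_le_mul_of_nonneg_right _ (pow_nonneg hx0.le j)
          exact le_trans h1 (mul_le_mul_of_nonneg_left h2 hbpos.le)
      _ = b * x ^ m * (1 / 2 : ℝ) ^ (m - j) := by
          rw [hxm, div_pow, div_pow]; ring
  have hgeom : ∑ j ∈ Finset.range m, ((1 : ℝ) / 2) ^ (m - j) = 1 - (1 / 2 : ℝ) ^ m := by
    rw [← Finset.sum_range_reflect]
    have : ∀ j ∈ Finset.range m, ((1:ℝ)/2) ^ (m - (m - 1 - j)) = ((1:ℝ)/2) ^ (j + 1) := by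
      intro j hj
      congr 1
      have := Finset.mem_range.mp hj
      omega
    rw [Finset.sum_congr rfl this]
    have hgs : ∀ k : ℕ, ∑ i ∈ Finset.range k, ((1:ℝ)/2)^(i+1) = 1 - (1/2:ℝ)^k := by
      intro k
      induction k with
      | zero => simp
      | succ k ih => rw [Finset.sum_range_succ, ih]; ring
    exact hgs m
  have hlower : |∑ j ∈ Finset.range m, a j * x ^ j| ≤ b * x ^ m * (1 - (1 / 2 : ℝ) ^ m) := by
    calc |∑ j ∈ Finset.range m, a j * x ^ j| ≤ ∑ j ∈ Finset.range m, |a j * x ^ j| :=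
        Finset.abs_sum_le_sum_abs _ _
      _ ≤ ∑ j ∈ Finset.range m, b * x ^ m * (1 / 2 : ℝ) ^ (m - j) :=
        Finset.sum_le_sum hterm
      _ = b * x ^ m * (1 - (1 / 2 : ℝ) ^ m) := by rw [← Finset.mul_sum, hgeom]
  have hbxm : 0 < b * x ^ m := mul_pos hbpos (pow_pos hx0 m)
  have hhalf : 0 < ((1:ℝ)/2) ^ m := by positivity
  have := neg_abs_le (∑ j ∈ Finset.range m, a j * x ^ j)
  rw [hsplit]
  nlinarith [mul_pos hbxm hhalf]
end
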